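/- Let (X,φ) be an irreducible expansive dynamical system that can be written as a union of countably many rectangles (with respect to the bracket map at scale ε). Then (X,φ) is synchronizing, i.e., it has at least one synchronizing point. -/

import Mathlib

open Filter Topology Set

namespace Paper

variable {X : Type*} [MetricSpace X] [CompactSpace X]

/-- The `n`-th iterate (for `n : ℤ`) of the homeomorphism `φ`. -/
def It (φ : X ≃ₜ X) (n : ℤ) : X → X := fun x => (φ.toEquiv ^ n) x

/-- The local stable set `Xˢ(x, ε)`. -/
def locS (φ : X ≃ₜ X) (x : X) (ε : ℝ) : Set X :=
  {y | ∀ n : ℕ, dist (It φ n x) (It φ n y) ≤ ε}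

/-- The local unstable set `Xᵘ(x, ε)`. -/
def locU (φ : X ≃ₜ X) (x : X) (ε : ℝ) : Set X :=
  {y | ∀ n : ℕ, dist (It φ (-(n : ℤ)) x) (It φ (-(n : ℤ)) y) ≤ ε}

/-- The set `D_ε` on which the bracket is defined. -/
def Dset (φ : X ≃ₜ X) (ε : ℝ) : Set (X × X) :=
  {p | (locS φ p.1 ε ∩ locU φ p.2 ε).Nonempty}

/-- `(X, φ)` is expansive with expansiveness constant `εX`. -/
def IsExpansive (φ : X ≃ₜ X) (εX : ℝ) : Prop :=
  0 < εX ∧ ∀ x y : X, (∀ n : ℤ, dist (It φ n x) (It φ n y) ≤ εX) → x = y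

/-- The metric is adapted (Fried), with constants `η` and `lam`. -/
def IsAdapted (φ : X ≃ₜ X) (η lam : ℝ) : Prop :=
  0 < η ∧ 0 < lam ∧ lam < 1 ∧
    (∀ x y : X, y ∈ locS φ x η → dist (φ x) (φ y) ≤ lam * dist x y) ∧
    (∀ x y : X, y ∈ locU φ x η → dist (φ.symm x) (φ.symm y) ≤ lam * dist x y)

/-- `p` is a periodic point of `φ`. -/
def IsPeriodic (φ : X ≃ₜ X) (p : X) : Prop :=
  ∃ n : ℕ, 1 ≤ n ∧ It φ n p = p

/-- `x` is a synchronizing point: `(x, x)` is in the interior of `D_ε` for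
some `0 < ε ≤ ε₀`. -/
def IsSyncPt (φ : X ≃ₜ X) (ε₀ : ℝ) (x : X) : Prop :=
  ∃ ε : ℝ, 0 < ε ∧ ε ≤ ε₀ ∧ (x, x) ∈ interior (Dset φ ε)

/-- `(X, φ)` is irreducible. -/
def Irred (φ : X ≃ₜ X) : Prop :=
  ∀ U V : Set X, IsOpen U → IsOpen V → U.Nonempty → V.Nonempty →
    ∃ n : ℕ, 0 < n ∧ (It φ n '' U ∩ V).Nonempty

/-- `(X, φ)` is mixing. -/
def Mixing (φ : X ≃ₜ X) : Prop :=
  ∀ U V : Set X, IsOpen U → IsOpen V → U.Nonempty → V.Nonempty →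
    ∃ N : ℕ, ∀ n : ℕ, N ≤ n → (It φ n '' U ∩ V).Nonempty

/-- Every point of `(X, φ)` is non-wandering. -/
def NonWandering (φ : X ≃ₜ X) : Prop :=
  ∀ x : X, ∀ U ∈ 𝓝 x, ∃ n : ℕ, 0 < n ∧ (It φ n '' U ∩ U).Nonempty

/-- Stable equivalence `x ∼ₛ y`. -/
def StableEq (φ : X ≃ₜ X) (x y : X) : Prop :=
  Tendsto (fun n : ℕ => dist (It φ n x) (It φ n y)) atTop (𝓝 0)

/-- Unstable equivalence `x ∼ᵤ y`. -/
def UnstableEq (φ : X ≃ₜ X) (x y : X) : Prop :=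
  Tendsto (fun n : ℕ => dist (It φ (-(n : ℤ)) x) (It φ (-(n : ℤ)) y)) atTop (𝓝 0)

/-- Local conjugacy `x ∼_lc y`: a homeomorphism `γ : U → V` of open
neighborhoods with `γ x = y` and `sup_{z ∈ U} d(φⁿ z, φⁿ (γ z)) → 0` as
`n → ±∞`. -/
def LocConj (φ : X ≃ₜ X) (x y : X) : Prop :=
  ∃ (U V : Set X) (γ γinv : X → X),
    IsOpen U ∧ IsOpen V ∧ x ∈ U ∧ y ∈ V ∧ γ x = y ∧
    Set.MapsTo γ U V ∧ Set.MapsTo γinv V U ∧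
    (∀ z ∈ U, γinv (γ z) = z) ∧ (∀ w ∈ V, γ (γinv w) = w) ∧
    ContinuousOn γ U ∧ ContinuousOn γinv V ∧
    (∀ ε : ℝ, 0 < ε → ∃ N : ℕ, ∀ n : ℤ, (N : ℤ) ≤ |n| → ∀ z ∈ U,
      dist (It φ n z) (It φ n (γ z)) ≤ ε)

/-- Stable local conjugacy `x ∼_lcs y`: a homeomorphism of `Xᵘ(x, δ)` onto
its image in `Xᵘ(y, δ')` sending `x` to `y`, uniformly asymptotic in forward
time. -/
def StableLC (φ : X ≃ₜ X) (x y : X) : Prop :=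
  ∃ (δ δ' : ℝ) (γ : X → X), 0 < δ ∧ 0 < δ' ∧
    Set.MapsTo γ (locU φ x δ) (locU φ y δ') ∧
    Set.InjOn γ (locU φ x δ) ∧ ContinuousOn γ (locU φ x δ) ∧ γ x = y ∧
    (∀ ε : ℝ, 0 < ε → ∃ N : ℕ, ∀ n : ℕ, N ≤ n → ∀ z ∈ locU φ x δ,
      dist (It φ n z) (It φ n (γ z)) ≤ ε)

/-- Unstable local conjugacy `x ∼_lcu y`: a homeomorphism of `Xˢ(x, δ)` onto
its image in `Xˢ(y, δ')` sending `x` to `y`, uniformly asymptotic in backward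
time. -/
def UnstableLC (φ : X ≃ₜ X) (x y : X) : Prop :=
  ∃ (δ δ' : ℝ) (γ : X → X), 0 < δ ∧ 0 < δ' ∧
    Set.MapsTo γ (locS φ x δ) (locS φ y δ') ∧
    Set.InjOn γ (locS φ x δ) ∧ ContinuousOn γ (locS φ x δ) ∧ γ x = y ∧
    (∀ ε : ℝ, 0 < ε → ∃ N : ℕ, ∀ n : ℕ, N ≤ n → ∀ z ∈ locS φ x δ,
      dist (It φ (-(n : ℤ)) z) (It φ (-(n : ℤ)) (γ z)) ≤ ε)

lemma continuous_It (φ : X ≃ₜ X) (n : ℤ) : Continuous (It φ n) := by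
  induction n using Int.induction_on with
  | zero =>
      rw [show It φ 0 = id from funext fun x => by simp [It]]; exact continuous_id
  | succ n ih =>
      have h : It φ ((n : ℤ) + 1) = fun x => It φ n (φ x) := by
        funext x
        simp [It, zpow_add_one, Equiv.Perm.mul_apply]
      rw [h]; exact ih.comp φ.continuous
  | pred n ih =>
      have h : It φ (-(n : ℤ) - 1) = fun x => It φ (-(n : ℤ)) (φ.symm x) := by
        funext x
        simp [It, zpow_sub_one, Equiv.Perm.mul_apply]
      rw [h]; exact ih.comp φ.symm.continuous

lemma isClosed_Dset (φ : X ≃ₜ X) (ε : ℝ) : IsClosed (Dset φ ε) := by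
  set K : Set (X × X × X) :=
    (⋂ n : ℕ, {q : X × X × X | dist (It φ n q.1) (It φ n q.2.2) ≤ ε}) ∩
    (⋂ n : ℕ, {q : X × X × X |
      dist (It φ (-(n : ℤ)) q.2.1) (It φ (-(n : ℤ)) q.2.2) ≤ ε}) with hK
  have hKclosed : IsClosed K := by
    refine IsClosed.inter (isClosed_iInter fun n => ?_) (isClosed_iInter fun n => ?_)
    · exact isClosed_le
        (Continuous.dist ((continuous_It φ n).comp continuous_fst)
          ((continuous_It φ n).comp (continuous_snd.comp continuous_snd)))
        continuous_const
    · exact isClosed_le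
        (Continuous.dist ((continuous_It φ (-(n : ℤ))).comp
            (continuous_fst.comp continuous_snd))
          ((continuous_It φ (-(n : ℤ))).comp (continuous_snd.comp continuous_snd)))
        continuous_const
  have himg : Dset φ ε = (fun q : X × X × X => (q.1, q.2.1)) '' K := by
    ext p
    constructor
    · rintro ⟨z, hzS, hzU⟩
      exact ⟨(p.1, p.2, z), ⟨mem_iInter.2 fun n => hzS n, mem_iInter.2 fun n => hzU n⟩,
        rfl⟩
    · rintro ⟨q, ⟨h1, h2⟩, hq⟩
      refine ⟨q.2.2, fun n => ?_, fun n => ?_⟩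
      · have := mem_iInter.1 h1 n
        simpa [← hq] using this
      · have := mem_iInter.1 h2 n
        simpa [← hq] using this
  rw [himg]
  exact (hKclosed.isCompact.image
    (continuous_fst.prodMk (continuous_fst.comp continuous_snd))).isClosed

/-- an irreducible expansive system that is a countable union of
rectangles has a synchronizing point. -/
theorem countably_rectangled_sync [Nonempty X] (φ : X ≃ₜ X) (εX η lam : ℝ)
    (hexp : IsExpansive φ εX) (had : IsAdapted φ η lam) (hirr : Irred φ)
    (ε : ℝ) (hε : 0 < ε) (hεle : ε ≤ min η (εX / 2)) (R : ℕ → Set X)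
    (hrect : ∀ n : ℕ, ∀ a ∈ R n, ∀ b ∈ R n, (a, b) ∈ Dset φ ε)
    (hcover : ∀ x : X, ∃ n : ℕ, x ∈ R n) :
    ∃ x : X, IsSyncPt φ (min η (εX / 2)) x := by
  -- Baire: some closure (R n) has nonempty interior
  obtain ⟨n, x, hx⟩ := nonempty_interior_of_iUnion_of_closed
    (f := fun n => closure (R n)) (fun n => isClosed_closure)
    (by
      apply Set.eq_univ_of_forall
      intro x
      obtain ⟨n, hn⟩ := hcover x
      exact Set.mem_iUnion.2 ⟨n, subset_closure hn⟩)
  -- closure (R n) × closure (R n) ⊆ Dset φ ε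
  have hsub : closure (R n) ×ˢ closure (R n) ⊆ Dset φ ε := by
    rw [← closure_prod_eq]
    refine (isClosed_Dset φ ε).closure_subset_iff.2 ?_
    rintro ⟨a, b⟩ ⟨ha, hb⟩
    exact hrect n a ha b hb
  refine ⟨x, ε, hε, hεle, ?_⟩
  have hopen : IsOpen (interior (closure (R n)) ×ˢ interior (closure (R n))) :=
    isOpen_interior.prod isOpen_interior
  exact interior_maximal
    ((Set.prod_mono interior_subset interior_subset).trans hsub) hopen ⟨hx, hx⟩

end Paper
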